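/- Let k be a positive integer and μ > 0. The map y ↦ (y/(kμ))·(1 − B_k(y/μ)), where B_k(ρ) = (ρ^k/k!)/(Σ_{j=0}^{k} ρ^j/j!), is strictly increasing on (0, ∞). -/

import Mathlib

open Finset

private lemma pow_cross_le {s t : ℝ} (hs : 0 < s) (hst : s < t) :
    ∀ m n : ℕ, m ≤ n → t ^ m * s ^ n ≤ s ^ m * t ^ n := by
  intro m n h
  obtain ⟨d, rfl⟩ := Nat.exists_eq_add_of_le h
  have h1 : s ^ d ≤ t ^ d := pow_le_pow_left₀ hs.le hst.le d
  have h2 : (0:ℝ) ≤ (t * s) ^ m := pow_nonneg (mul_nonneg (hs.trans hst).le hs.le) m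
  calc t ^ m * s ^ (m + d) = (t * s) ^ m * s ^ d := by ring
    _ ≤ (t * s) ^ m * t ^ d := by exact mul_le_mul_of_nonneg_left h1 h2
    _ = s ^ m * t ^ (m + d) := by ring

private lemma cross_nonneg {s t : ℝ} (hs : 0 < s) (hst : s < t) (n m : ℕ) :
    0 ≤ ((n : ℝ) - m) * (t ^ n * s ^ m - s ^ n * t ^ m) := by
  rcases le_total n m with h | h
  · have h1 : (n : ℝ) - m ≤ 0 := by simp only [sub_nonpos]; exact_mod_cast h
    have h2 := pow_cross_le hs hst n m h
    nlinarith
  · apply mul_nonneg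
    · simp only [sub_nonneg]
      exact_mod_cast h
    · have := pow_cross_le hs hst m n h
      linarith

theorem occupancy_strictMonoOn
    (k : ℕ) (hk : 0 < k) (μ : ℝ) (hμ : 0 < μ) :
    StrictMonoOn
      (fun y : ℝ => y / ((k : ℝ) * μ) *
        (1 - ((y / μ) ^ k / (Nat.factorial k : ℝ)) /
          (∑ j ∈ range (k + 1), (y / μ) ^ j / (Nat.factorial j : ℝ))))
      (Set.Ioi 0) := by
  have hk0 : (0:ℝ) < (k : ℝ) := by exact_mod_cast hk
  set S : ℝ → ℝ := fun z => ∑ j ∈ range (k + 1), z ^ j / (Nat.factorial j : ℝ) with hS_def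
  set T : ℝ → ℝ := fun z => ∑ j ∈ range (k + 1), (j : ℝ) * z ^ j / (Nat.factorial j : ℝ)
    with hT_def
  have hSpos : ∀ z : ℝ, 0 < z → 0 < S z := by
    intro z hz
    refine Finset.sum_pos (fun j _ => div_pos (pow_pos hz j) ?_) ⟨0, by simp⟩
    exact_mod_cast Nat.factorial_pos j
  -- the key algebraic identity: ρ * S ρ = T ρ + ρ^(k+1)/k!
  have hid : ∀ ρ : ℝ, ρ * S ρ = T ρ + ρ ^ (k + 1) / (Nat.factorial k : ℝ) := by
    intro ρ
    have h1 : ∑ i ∈ range (k + 2), (i : ℝ) * ρ ^ i / (Nat.factorial i : ℝ)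
        = ρ * S ρ := by
      rw [Finset.sum_range_succ' (fun i => (i : ℝ) * ρ ^ i / (Nat.factorial i : ℝ))]
      simp only [hS_def, Finset.mul_sum]
      rw [Nat.cast_zero, zero_mul, zero_div, add_zero]
      refine Finset.sum_congr rfl fun j _ => ?_
      have hfact : (Nat.factorial (j + 1) : ℝ) = (j + 1) * (Nat.factorial j : ℝ) := by
        push_cast [Nat.factorial_succ]; ring
      have hjf : (Nat.factorial j : ℝ) ≠ 0 := by
        exact_mod_cast (Nat.factorial_pos j).ne'
      have hj1 : ((j : ℝ) + 1) ≠ 0 := by positivity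
      rw [hfact]
      field_simp
      push_cast
      ring
    have h2 : ∑ i ∈ range (k + 2), (i : ℝ) * ρ ^ i / (Nat.factorial i : ℝ)
        = T ρ + ρ ^ (k + 1) / (Nat.factorial k : ℝ) := by
      rw [Finset.sum_range_succ]
      congr 1
      have hfact : (Nat.factorial (k + 1) : ℝ) = (k + 1) * (Nat.factorial k : ℝ) := by
        push_cast [Nat.factorial_succ]; ring
      have hkf : (Nat.factorial k : ℝ) ≠ 0 := by
        exact_mod_cast (Nat.factorial_pos k).ne'
      have hk1 : ((k : ℝ) + 1) ≠ 0 := by positivity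
      rw [hfact]
      push_cast
      field_simp
    rw [← h1, h2]
  -- rewrite the occupancy as T/(k·S)
  have hu : ∀ z : ℝ, 0 < z →
      z / ((k : ℝ) * μ) * (1 - ((z / μ) ^ k / (Nat.factorial k : ℝ)) / S (z / μ))
        = T (z / μ) / ((k : ℝ) * S (z / μ)) := by
    intro z hz
    have hρ : 0 < z / μ := div_pos hz hμ
    have hS : 0 < S (z / μ) := hSpos _ hρ
    have hT : T (z / μ) = (z / μ) * S (z / μ) - (z / μ) ^ (k + 1) / (Nat.factorial k : ℝ) := by
      have := hid (z / μ)
      linarith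
    rw [hT]
    have hkf : (Nat.factorial k : ℝ) ≠ 0 := by
      exact_mod_cast (Nat.factorial_pos k).ne'
    have hμ0 : μ ≠ 0 := hμ.ne'
    field_simp
    have e : μ * (z / μ) ^ (k + 1) = z * (z / μ) ^ k := by
      rw [pow_succ, mul_comm, mul_assoc, div_mul_cancel₀ z hμ0, mul_comm]
    rw [e]
    ring
  intro x hx y hy hxy
  simp only [Set.mem_Ioi] at hx hy
  have hs : 0 < x / μ := div_pos hx hμ
  have hst : x / μ < y / μ := by gcongr
  have ht : 0 < y / μ := hs.trans hst
  set s := x / μ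
  set t := y / μ
  have hSs : 0 < S s := hSpos _ hs
  have hSt : 0 < S t := hSpos _ ht
  -- the key cross inequality: T s * S t < T t * S s
  have key : T s * S t < T t * S s := by
    have hexp : ∀ a b : ℝ, T b * S a
        = ∑ n ∈ range (k + 1), ∑ m ∈ range (k + 1),
            ((n : ℝ) * b ^ n / (Nat.factorial n : ℝ)) * (a ^ m / (Nat.factorial m : ℝ)) := by
      intro a b
      exact Finset.sum_mul_sum _ _ _ _
    have hdiff : T t * S s - T s * S t
        = ∑ n ∈ range (k + 1), ∑ m ∈ range (k + 1),
            (((n : ℝ) * t ^ n / (Nat.factorial n : ℝ)) * (s ^ m / (Nat.factorial m : ℝ))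
              - ((n : ℝ) * s ^ n / (Nat.factorial n : ℝ)) * (t ^ m / (Nat.factorial m : ℝ))) := by
      rw [hexp s t, hexp t s, ← Finset.sum_sub_distrib]
      exact Finset.sum_congr rfl fun n _ => (Finset.sum_sub_distrib _ _).symm
    have hcomm : T t * S s - T s * S t
        = ∑ n ∈ range (k + 1), ∑ m ∈ range (k + 1),
            (((m : ℝ) * t ^ m / (Nat.factorial m : ℝ)) * (s ^ n / (Nat.factorial n : ℝ))
              - ((m : ℝ) * s ^ m / (Nat.factorial m : ℝ)) * (t ^ n / (Nat.factorial n : ℝ))) := by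
      rw [hdiff]
      exact Finset.sum_comm
    have hdouble : (T t * S s - T s * S t) + (T t * S s - T s * S t)
        = ∑ n ∈ range (k + 1), ∑ m ∈ range (k + 1),
            ((n : ℝ) - m) * (t ^ n * s ^ m - s ^ n * t ^ m)
              / ((Nat.factorial n : ℝ) * (Nat.factorial m : ℝ)) := by
      nth_rewrite 2 [hcomm]
      nth_rewrite 1 [hdiff]
      rw [← Finset.sum_add_distrib]
      refine Finset.sum_congr rfl fun n _ => ?_
      rw [← Finset.sum_add_distrib]
      refine Finset.sum_congr rfl fun m _ => ?_
      ring
    have hpos : 0 < ∑ n ∈ range (k + 1), ∑ m ∈ range (k + 1),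
        ((n : ℝ) - m) * (t ^ n * s ^ m - s ^ n * t ^ m)
          / ((Nat.factorial n : ℝ) * (Nat.factorial m : ℝ)) := by
      have hterm : ∀ n m : ℕ, 0 ≤ ((n : ℝ) - m) * (t ^ n * s ^ m - s ^ n * t ^ m)
          / ((Nat.factorial n : ℝ) * (Nat.factorial m : ℝ)) := by
        intro n m
        apply div_nonneg (cross_nonneg hs hst n m)
        positivity
      refine Finset.sum_pos' (fun n _ => Finset.sum_nonneg fun m _ => hterm n m)
        ⟨k, Finset.self_mem_range_succ k, ?_⟩
      refine Finset.sum_pos' (fun m _ => hterm k m) ⟨0, Finset.mem_range.mpr (by omega), ?_⟩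
      have hkf : (0:ℝ) < (Nat.factorial k : ℝ) := by exact_mod_cast Nat.factorial_pos k
      have hpow : s ^ k < t ^ k := pow_lt_pow_left₀ hst hs.le hk.ne'
      apply div_pos
      · apply mul_pos
        · simpa using hk0
        · simp only [pow_zero, mul_one, one_mul]
          linarith
      · simp [hkf]
    nlinarith [hdouble, hpos]
  -- conclude
  show x / ((k : ℝ) * μ) * (1 - (s ^ k / (Nat.factorial k : ℝ)) / S s)
      < y / ((k : ℝ) * μ) * (1 - (t ^ k / (Nat.factorial k : ℝ)) / S t)
  rw [hu x hx, hu y hy]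
  rw [div_lt_div_iff₀ (by positivity) (by positivity)]
  nlinarith [key, hk0]
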